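/- arXiv:2603.18903 — 2 statements merged into one kernel-verified Lean document; each statement's English description precedes it below -/
import Mathlib

section
/- For all real U > 0 and λ with 0 < λ < 1, the inequality 14U + 5λ·v₁ + 7λ·v₂ − 12λ·v₃ > 0 holds, where v₁ = −(20λ²+λ+42)U/((7−λ)(3−λ)(2−λ)), v₂ = −6(7+6λ)U/((7−λ)(3−λ)), and v₃ = −21(7+4λ)U/((7−λ)(7−2λ)). (Base case of the Bellman inequality 14U + 5λ v(L−2,L−3) + 7λ v(L−2,L−2) − 12λ v(L,L−3) > 0.) -/
theorem stmt_11 (U l : ℝ) (hU : 0 < U) (h0 : 0 < l) (h1 : l < 1) :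
    14 * U + 5 * l * (-((20 * l ^ 2 + l + 42) * U) / ((7 - l) * (3 - l) * (2 - l)))
      + 7 * l * (-(6 * (7 + 6 * l) * U) / ((7 - l) * (3 - l)))
      - 12 * l * (-(21 * (7 + 4 * l) * U) / ((7 - l) * (7 - 2 * l))) > 0 := by
  have h7 : (0:ℝ) < 7 - l := by linarith
  have h3 : (0:ℝ) < 3 - l := by linarith
  have h2 : (0:ℝ) < 2 - l := by linarith
  have h72 : (0:ℝ) < 7 - 2 * l := by linarith
  have key : 14 * U + 5 * l * (-((20 * l ^ 2 + l + 42) * U) / ((7 - l) * (3 - l) * (2 - l)))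
      + 7 * l * (-(6 * (7 + 6 * l) * U) / ((7 - l) * (3 - l)))
      - 12 * l * (-(21 * (7 + 4 * l) * U) / ((7 - l) * (7 - 2 * l)))
      = U * (732 * l ^ 4 - 2216 * l ^ 3 - 357 * l ^ 2 - 196 * l + 4116)
        / ((7 - l) * (3 - l) * (2 - l) * (7 - 2 * l)) := by
    field_simp [show (7:ℝ) - l * 2 ≠ 0 by linarith]
    ring
  rw [key]
  have hnum : 0 < 732 * l ^ 4 - 2216 * l ^ 3 - 357 * l ^ 2 - 196 * l + 4116 := by
    nlinarith [pow_le_one₀ h0.le h1.le (n := 3), sq_nonneg l, pow_pos h0 4]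
  positivity
end

section
/- For all real U > 0 and λ with 0 < λ < 1, the inequality v₁ + 3v₂ − 4v₃ > 0 holds, where v₁ = −(20λ²+λ+42)U/((7−λ)(3−λ)(2−λ)), v₂ = −6(7+6λ)U/((7−λ)(3−λ)), and v₃ = −21(7+4λ)U/((7−λ)(7−2λ)). (Base case of the Bellman inequality v(L−2,j) + 3 v(L−2,j+1) − 4 v(L,j) > 0 at j = L−3.) -/
theorem stmt_12 (U l : ℝ) (hU : 0 < U) (h0 : 0 < l) (h1 : l < 1) :
    (-((20 * l ^ 2 + l + 42) * U) / ((7 - l) * (3 - l) * (2 - l)))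
      + 3 * (-(6 * (7 + 6 * l) * U) / ((7 - l) * (3 - l)))
      - 4 * (-(21 * (7 + 4 * l) * U) / ((7 - l) * (7 - 2 * l))) > 0 := by
  have ha : (0:ℝ) < 7 - l := by linarith
  have hb : (0:ℝ) < 3 - l := by linarith
  have hc : (0:ℝ) < 2 - l := by linarith
  have hd : (0:ℝ) < 7 - 2 * l := by linarith
  have hN : (0:ℝ) < 1470 - 973 * l - 294 * l ^ 2 + 160 * l ^ 3 := by nlinarith
  have key : (-((20 * l ^ 2 + l + 42) * U) / ((7 - l) * (3 - l) * (2 - l)))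
      + 3 * (-(6 * (7 + 6 * l) * U) / ((7 - l) * (3 - l)))
      - 4 * (-(21 * (7 + 4 * l) * U) / ((7 - l) * (7 - 2 * l)))
      = U * (1470 - 973 * l - 294 * l ^ 2 + 160 * l ^ 3)
        / ((7 - l) * (3 - l) * (2 - l) * (7 - 2 * l)) := by
    rw [mul_div_assoc', mul_div_assoc', div_add_div _ _ (by positivity) (by positivity), div_sub_div _ _ (by positivity) (by positivity), div_eq_div_iff (by positivity) (by positivity)]
    ring
  rw [key]
  positivity
end
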